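/- arXiv:2005.05885 — 2 statements merged into one kernel-verified Lean document; each statement's English description precedes it below -/
import Mathlib

section
/- For each i ∈ {1,...,n}, the product of the automorphisms σ_{j,i} over all j ≠ i (in any order) equals the inner automorphism of W_n given by conjugation by x_i. -/
/-- The universal Coxeter group of rank `n`: the free product of `n` copies of `ℤ/2ℤ`. -/
abbrev W (n : ℕ) : Type := Monoid.CoprodI (fun _ : Fin n => Multiplicative (ZMod 2))

/-- The standard generator `xᵢ` of `Wₙ`: the image of the generator of the `i`-th factor. -/
def x {n : ℕ} (i : Fin n) : W n := Monoid.CoprodI.of (i := i) (Multiplicative.ofAdd 1)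

lemma x_mul_x {n : ℕ} (i : Fin n) : x i * x i = 1 := by
  have h : (Multiplicative.ofAdd (1 : ZMod 2)) * Multiplicative.ofAdd 1 = 1 := by decide
  rw [x, ← map_mul, h, map_one]

lemma x_inv {n : ℕ} (i : Fin n) : (x i)⁻¹ = x i :=
  inv_eq_of_mul_eq_one_right (x_mul_x i)

lemma prod_fix {n : ℕ} (σ : Fin n → MulAut (W n)) (g : W n) :
    ∀ l : List (Fin n), (∀ j ∈ l, σ j g = g) → (l.map σ).prod g = g := by
  intro l
  induction l with
  | nil => intro _; simp
  | cons a t ih =>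
    intro h
    simp only [List.map_cons, List.prod_cons, MulAut.mul_apply]
    rw [ih (fun j hj => h j (List.mem_cons_of_mem a hj)), h a List.mem_cons_self]

lemma prod_apply_x {n : ℕ} (i : Fin n) (σ : Fin n → MulAut (W n))
    (hσ : ∀ j, j ≠ i → σ j (x j) = x i * x j * x i ∧ ∀ k, k ≠ j → σ j (x k) = x k) :
    ∀ l : List (Fin n), l.Nodup → (∀ j ∈ l, j ≠ i) → ∀ k ∈ l,
      (l.map σ).prod (x k) = x i * x k * x i := by
  intro l
  induction l with
  | nil => simp
  | cons a t ih =>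
    intro hnd hl k hk
    have ha : a ≠ i := hl a List.mem_cons_self
    have hnat : a ∉ t := (List.nodup_cons.mp hnd).1
    simp only [List.map_cons, List.prod_cons, MulAut.mul_apply]
    rcases List.mem_cons.mp hk with rfl | hkt
    · rw [prod_fix σ (x k) t (fun j hj =>
        (hσ j (hl j (List.mem_cons_of_mem _ hj))).2 k (fun h => hnat (h ▸ hj)))]
      exact (hσ k ha).1
    · have hka : k ≠ a := fun h => hnat (h ▸ hkt)
      rw [ih (List.nodup_cons.mp hnd).2 (fun j hj => hl j (List.mem_cons_of_mem _ hj)) k hkt]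
      rw [map_mul, map_mul, (hσ a ha).2 i (Ne.symm ha), (hσ a ha).2 k hka]

/-- For each `i`, the product of the automorphisms `σ_{j,i}` over all `j ≠ i`,
taken in any order, equals the inner automorphism of `Wₙ` given by conjugation by `xᵢ`. -/
theorem prod_partial_conjugations_eq_conj {n : ℕ} (hn : 2 ≤ n) (i : Fin n)
    (σ : Fin n → MulAut (W n))
    (hσ : ∀ j, j ≠ i → σ j (x j) = x i * x j * x i ∧ ∀ k, k ≠ j → σ j (x k) = x k)
    (l : List (Fin n)) (hnd : l.Nodup) (hmem : ∀ j, j ∈ l ↔ j ≠ i) :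
    (l.map σ).prod = MulAut.conj (x i) := by
  have hl : ∀ j ∈ l, j ≠ i := fun j hj => (hmem j).mp hj
  apply MulEquiv.toMonoidHom_injective
  apply Monoid.CoprodI.ext_hom
  intro j
  apply MonoidHom.ext
  intro m
  have hm : m = 1 ∨ m = Multiplicative.ofAdd 1 := by revert m; decide
  rcases hm with rfl | rfl
  · simp
  · show (l.map σ).prod (x j) = MulAut.conj (x i) (x j)
    rw [MulAut.conj_apply, x_inv]
    by_cases hji : j = i
    · subst hji
      rw [prod_fix σ (x j) l (fun k hk => (hσ k (hl k hk)).2 j (Ne.symm (hl k hk)))]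
      rw [x_mul_x, one_mul]
    · exact prod_apply_x i σ hσ l hnd hl j ((hmem j).mpr hji)
end

section
/- Let T be a finite tree and S a set of vertices of T that contains every leaf of T, and suppose every vertex of T not in S has degree at least 3. Then distinct edges of T induce distinct bipartitions of S: for an edge e, the bipartition of S is given by the intersection of S with the two connected components of T minus the interior of e; if e ≠ f are edges, these bipartitions of S are different. -/
open SimpleGraph

variable {V : Type} [DecidableEq V] {G : SimpleGraph V}

private lemma bridge_not_reach (hT : G.IsTree) {a b : V} (hab : G.Adj a b) :
    ¬ (G.deleteEdges {s(a, b)}).Reachable a b :=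
  isBridge_iff.mp ((isAcyclic_iff_forall_adj_isBridge.mp hT.IsAcyclic) hab)

private lemma reach_step {a b u w : V} (h : G.Adj u w) (hne : s(u, w) ≠ s(a, b)) :
    (G.deleteEdges {s(a, b)}).Adj u w := by
  simp only [deleteEdges_adj, Set.mem_singleton_iff]
  exact ⟨h, hne⟩

private lemma reach_or_aux {a b : V} :
    ∀ {u w : V} (_ : G.Walk w u),
      ((G.deleteEdges {s(a, b)}).Reachable a u ∨ (G.deleteEdges {s(a, b)}).Reachable b u) →
      ((G.deleteEdges {s(a, b)}).Reachable a w ∨ (G.deleteEdges {s(a, b)}).Reachable b w) := by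
  intro u w p
  induction p with
  | nil => exact id
  | @cons y x _ h q ih =>
      intro hu
      by_cases he : s(x, y) = s(a, b)
      · rw [Sym2.eq_iff] at he
        rcases he with ⟨hx, hy⟩ | ⟨hx, hy⟩
        · subst hy; exact Or.inr Reachable.rfl
        · subst hy; exact Or.inl Reachable.rfl
      · rcases ih hu with h' | h'
        · exact Or.inl (h'.trans (Adj.reachable (reach_step h.symm he)))
        · exact Or.inr (h'.trans (Adj.reachable (reach_step h.symm he)))

private lemma reach_or (hc : G.Connected) {a b : V} (w : V) :
    (G.deleteEdges {s(a, b)}).Reachable a w ∨ (G.deleteEdges {s(a, b)}).Reachable b w := by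
  obtain ⟨p⟩ := hc w a
  exact reach_or_aux p (Or.inl Reachable.rfl)

private lemma parent_unique (hT : G.IsTree) {r v w1 w2 : V}
    (h1 : G.Adj v w1) (h2 : G.Adj v w2)
    (d1 : G.dist r w1 ≤ G.dist r v) (d2 : G.dist r w2 ≤ G.dist r v) : w1 = w2 := by
  by_contra hne
  obtain ⟨p1, hp1, hl1⟩ := hT.isConnected.exists_path_of_dist r w1
  obtain ⟨p2, hp2, hl2⟩ := hT.isConnected.exists_path_of_dist r w2
  have hv : ∀ {w : V}, G.Adj v w → ∀ (p : G.Walk r w), p.length = G.dist r w →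
      G.dist r w ≤ G.dist r v → v ∉ p.support := by
    intro w hw p hl hd hmem
    have t1 : G.dist r v ≤ (p.takeUntil v hmem).length := SimpleGraph.dist_le _
    have t2 := p.length_takeUntil_le hmem
    have hsplit : (p.takeUntil v hmem).length + (p.dropUntil v hmem).length = p.length := by
      rw [← Walk.length_append, Walk.take_spec]
    have h0 : (p.dropUntil v hmem).length = 0 := by omega
    exact hw.ne (Walk.eq_of_length_eq_zero h0)
  have hv1 : v ∉ p1.support := hv h1 p1 hl1 d1
  have hv2 : v ∉ p2.support := hv h2 p2 hl2 d2
  have hq1 : (p1.concat h1.symm).IsPath := by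
    rw [← Walk.isPath_reverse_iff, Walk.reverse_concat]
    exact (Walk.cons_isPath_iff _ _).mpr ⟨hp1.reverse, by simpa using hv1⟩
  have hq2 : (p2.concat h2.symm).IsPath := by
    rw [← Walk.isPath_reverse_iff, Walk.reverse_concat]
    exact (Walk.cons_isPath_iff _ _).mpr ⟨hp2.reverse, by simpa using hv2⟩
  obtain ⟨p, -, hu⟩ := hT.existsUnique_path r v
  have heq : p1.concat h1.symm = p2.concat h2.symm := (hu _ hq1).trans (hu _ hq2).symm
  have he1 : s(w1, v) ∈ (p1.concat h1.symm).edges := by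
    rw [Walk.edges_concat]; simp
  rw [heq, Walk.edges_concat, List.concat_eq_append] at he1
  rcases List.mem_append.mp he1 with hmem | hmem
  · exact hv2 (p2.snd_mem_support_of_mem_edges hmem)
  · rw [List.mem_singleton, Sym2.eq_iff] at hmem
    rcases hmem with ⟨hh, -⟩ | ⟨hh, -⟩
    · exact hne hh
    · exact h1.ne hh.symm

private lemma core [Fintype V] [DecidableRel G.Adj] (hT : G.IsTree) (S : Set V)
    (hdeg : ∀ v, v ∉ S → 3 ≤ G.degree v)
    {a b c d : V} (hab : G.Adj a b) (hcd : G.Adj c d)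
    (hXS : ∀ v, (G.deleteEdges {s(a, b)}).Reachable a v →
        (G.deleteEdges {s(c, d)}).Reachable d v → v ∉ S)
    (v0 : V) (h0a : (G.deleteEdges {s(a, b)}).Reachable a v0)
    (h0d : (G.deleteEdges {s(c, d)}).Reachable d v0) : False := by
  classical
  set P : V → Prop := fun v => (G.deleteEdges {s(a, b)}).Reachable a v ∧
    (G.deleteEdges {s(c, d)}).Reachable d v with hP
  set X : Finset V := Finset.univ.filter P with hX
  have hmemX : ∀ v, v ∈ X ↔ P v := by intro v; simp [hX]
  obtain ⟨v, hvX, hmax⟩ := X.exists_max_image (fun w => G.dist a w)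
    ⟨v0, (hmemX v0).mpr ⟨h0a, h0d⟩⟩
  have hvP : P v := (hmemX v).mp hvX
  have hbA : ¬ (G.deleteEdges {s(a, b)}).Reachable a b := bridge_not_reach hT hab
  have hcD : ¬ (G.deleteEdges {s(c, d)}).Reachable d c :=
    fun h => bridge_not_reach hT hcd h.symm
  have cross : ∀ w, G.Adj v w → ¬ P w → (v = a ∧ w = b) ∨ (v = d ∧ w = c) := by
    intro w hvw hw
    rw [hP, not_and_or] at hw
    rcases hw with hw | hw
    · have he : s(v, w) = s(a, b) := by
        by_contra hne
        exact hw (hvP.1.trans (Adj.reachable (reach_step hvw hne)))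
      rw [Sym2.eq_iff] at he
      rcases he with ⟨hv, hw'⟩ | ⟨hv, hw'⟩
      · exact Or.inl ⟨hv, hw'⟩
      · exact absurd (hv ▸ hvP.1) hbA
    · have he : s(v, w) = s(c, d) := by
        by_contra hne
        exact hw (hvP.2.trans (Adj.reachable (reach_step hvw hne)))
      rw [Sym2.eq_iff] at he
      rcases he with ⟨hv, hw'⟩ | ⟨hv, hw'⟩
      · exact absurd (hv ▸ hvP.2) hcD
      · exact Or.inr ⟨hv, hw'⟩
  have hvS : v ∉ S := hXS v hvP.1 hvP.2
  have hdegv := hdeg v hvS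
  set Fa : Finset V := (G.neighborFinset v).filter (fun w => G.dist a v < G.dist a w) with hFa
  set Cl : Finset V := (G.neighborFinset v).filter (fun w => ¬ G.dist a v < G.dist a w) with hCl
  have hcard : Fa.card + Cl.card = G.degree v :=
    Finset.card_filter_add_card_filter_not _
  have hCl1 : Cl.card ≤ 1 := by
    apply Finset.card_le_one.mpr
    intro w1 hw1 w2 hw2
    rw [hCl, Finset.mem_filter, mem_neighborFinset, not_lt] at hw1 hw2
    exact parent_unique hT hw1.1 hw2.1 hw1.2 hw2.2
  have hFa2 : 2 ≤ Fa.card := by omega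
  have hFaout : ∀ w ∈ Fa, (v = a ∧ w = b) ∨ (v = d ∧ w = c) := by
    intro w hw
    rw [hFa, Finset.mem_filter, mem_neighborFinset] at hw
    refine cross w hw.1 (fun hPw => ?_)
    exact absurd (hmax w ((hmemX w).mpr hPw)) (not_le.mpr hw.2)
  by_cases hva : v = a
  · have hCl0 : Cl = ∅ := by
      ext w
      rw [hCl, Finset.mem_filter, mem_neighborFinset, not_lt]
      simp only [Finset.notMem_empty, iff_false, not_and]
      intro hadj hle
      have h0 : G.dist a v = 0 := by rw [hva]; exact SimpleGraph.dist_self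
      have hw0 : G.dist a w = 0 := by omega
      have : a = w := (Reachable.dist_eq_zero_iff (hT.isConnected a w)).mp hw0
      exact hadj.ne (hva.trans this)
    have hsub : Fa ⊆ {b, c} := by
      intro w hw
      rcases hFaout w hw with ⟨-, rfl⟩ | ⟨-, rfl⟩ <;> simp
    have h2 : Fa.card ≤ 2 := by
      refine le_trans (Finset.card_le_card hsub) ?_
      refine le_trans (Finset.card_insert_le _ _) ?_
      simp
    rw [hCl0] at hcard
    simp at hcard
    omega
  · obtain ⟨w1, hw1, w2, hw2, hww⟩ := Finset.one_lt_card.mp hFa2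
    rcases hFaout w1 hw1 with ⟨h, -⟩ | ⟨-, rfl⟩
    · exact hva h
    · rcases hFaout w2 hw2 with ⟨h, -⟩ | ⟨-, rfl⟩
      · exact hva h
      · exact hww rfl

private lemma case1 [Fintype V] [DecidableRel G.Adj] (hT : G.IsTree) (S : Set V)
    (hdeg : ∀ v, v ∉ S → 3 ≤ G.degree v)
    {a b c d : V} (hab : G.Adj a b) (hcd : G.Adj c d) (hne : s(a, b) ≠ s(c, d))
    (h1 : {u ∈ S | (G.deleteEdges {s(a, b)}).Reachable a u} =
          {u ∈ S | (G.deleteEdges {s(c, d)}).Reachable c u})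
    (h2 : {u ∈ S | (G.deleteEdges {s(a, b)}).Reachable b u} =
          {u ∈ S | (G.deleteEdges {s(c, d)}).Reachable d u}) : False := by
  simp only [Set.ext_iff, Set.mem_setOf_eq] at h1 h2
  have hfdc : ¬ (G.deleteEdges {s(c, d)}).Reachable d c :=
    fun h => bridge_not_reach hT hcd h.symm
  by_cases hX : ∃ v, (G.deleteEdges {s(a, b)}).Reachable a v ∧
      (G.deleteEdges {s(c, d)}).Reachable d v
  · obtain ⟨v, hva, hvd⟩ := hX
    refine core hT S hdeg hab hcd ?_ v hva hvd
    intro u hua hud huS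
    have huc : (G.deleteEdges {s(c, d)}).Reachable c u := ((h1 u).mp ⟨huS, hua⟩).2
    exact hfdc (hud.trans huc.symm)
  · by_cases hY : ∃ v, (G.deleteEdges {s(b, a)}).Reachable b v ∧
        (G.deleteEdges {s(d, c)}).Reachable c v
    · obtain ⟨v, hvb, hvc⟩ := hY
      refine core hT S hdeg hab.symm hcd.symm ?_ v hvb hvc
      intro u hub huc huS
      rw [show s(b, a) = s(a, b) from Sym2.eq_swap] at hub
      rw [show s(d, c) = s(c, d) from Sym2.eq_swap] at huc
      have hud : (G.deleteEdges {s(c, d)}).Reachable d u := ((h2 u).mp ⟨huS, hub⟩).2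
      exact hfdc (hud.trans huc.symm)
    · push_neg at hX hY
      have hca : (G.deleteEdges {s(a, b)}).Reachable a c := by
        rcases reach_or hT.isConnected (a := a) (b := b) c with h | h
        · exact h
        · exfalso
          have hYc := hY c
          rw [show s(b, a) = s(a, b) from Sym2.eq_swap,
            show s(d, c) = s(c, d) from Sym2.eq_swap] at hYc
          exact hYc h Reachable.rfl
      have hda : ¬ (G.deleteEdges {s(a, b)}).Reachable a d :=
        fun h => hX d h Reachable.rfl
      have hadj : (G.deleteEdges {s(a, b)}).Adj c d := reach_step hcd (fun h => hne h.symm)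
      exact hda (hca.trans hadj.reachable)


/-- Let `T` be a finite tree and `S` a set of vertices containing every leaf, such that every
vertex not in `S` has degree at least 3. Then distinct edges of `T` induce distinct
(unordered) bipartitions of `S`, where the bipartition induced by an edge is given by
intersecting `S` with the two connected components obtained by deleting the edge. -/
theorem tree_edges_induce_distinct_partitions {V : Type} [Fintype V] [DecidableEq V]
    (G : SimpleGraph V) [DecidableRel G.Adj] (hT : G.IsTree) (S : Set V)
    (hleaves : ∀ v, G.degree v = 1 → v ∈ S)
    (hdeg : ∀ v, v ∉ S → 3 ≤ G.degree v)
    (a b c d : V) (hab : G.Adj a b) (hcd : G.Adj c d)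
    (hne : s(a, b) ≠ s(c, d)) :
    ¬ (({u ∈ S | (G.deleteEdges {s(a, b)}).Reachable a u} =
          {u ∈ S | (G.deleteEdges {s(c, d)}).Reachable c u} ∧
        {u ∈ S | (G.deleteEdges {s(a, b)}).Reachable b u} =
          {u ∈ S | (G.deleteEdges {s(c, d)}).Reachable d u}) ∨
       ({u ∈ S | (G.deleteEdges {s(a, b)}).Reachable a u} =
          {u ∈ S | (G.deleteEdges {s(c, d)}).Reachable d u} ∧
        {u ∈ S | (G.deleteEdges {s(a, b)}).Reachable b u} =
          {u ∈ S | (G.deleteEdges {s(c, d)}).Reachable c u})) := by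
  rintro (⟨h1, h2⟩ | ⟨h1, h2⟩)
  · exact case1 hT S hdeg hab hcd hne h1 h2
  · have hsw : s(c, d) = s(d, c) := Sym2.eq_swap
    rw [hsw] at h1 h2 hne
    exact case1 hT S hdeg hab hcd.symm hne h1 h2
end
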